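/- Let η : ℝ → ℝ be odd, and suppose P(ξ) = ξ − η(ξ) and T(ξ) = ξ + η(ξ) are both monotone nondecreasing with P(0) = T(0) = 0. Then for all x₁, x₂ ∈ ℝ: if |x₁| ≥ |x₂| then (x₂ − η(x₁))² ≤ (x₁ − η(x₂))², and if |x₂| ≥ |x₁| then (x₁ − η(x₂))² ≤ (x₂ − η(x₁))². -/
import Mathlib

/-- If `η` is odd and `P(ξ) = ξ − η(ξ)`, `T(ξ) = ξ + η(ξ)` are monotone
nondecreasing with `P(0) = T(0) = 0`, then the max-magnitude rule orders the
two squared estimation errors. -/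
theorem max_scheduling_optimal (η : ℝ → ℝ) (hodd : ∀ ξ : ℝ, η (-ξ) = -η ξ)
    (hP : Monotone (fun ξ : ℝ => ξ - η ξ)) (hT : Monotone (fun ξ : ℝ => ξ + η ξ))
    (hP0 : (0 : ℝ) - η 0 = 0) (hT0 : (0 : ℝ) + η 0 = 0) :
    ∀ x₁ x₂ : ℝ,
      (|x₁| ≥ |x₂| → (x₂ - η x₁) ^ 2 ≤ (x₁ - η x₂) ^ 2) ∧
      (|x₂| ≥ |x₁| → (x₁ - η x₂) ^ 2 ≤ (x₂ - η x₁) ^ 2) := by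
  have key : ∀ a b : ℝ, |b| ≤ |a| → (b - η a) ^ 2 ≤ (a - η b) ^ 2 := by
    intro a b hab
    rcases le_abs.mp hab with h | h
    · have h1 : b ≤ a := le_trans (le_abs_self b) h
      have h2 : -b ≤ a := by linarith [neg_le_abs b]
      have hT' : b + η b ≤ a + η a := hT h1
      have hP' : (-b) - η (-b) ≤ a - η a := hP h2
      rw [hodd b] at hP'
      nlinarith [hT', hP']
    · have h1 : a ≤ -b := by linarith [le_abs_self b]
      have h2 : a ≤ b := by linarith [neg_le_abs b]
      have hT' : a + η a ≤ b + η b := hT h2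
      have hP' : a - η a ≤ (-b) - η (-b) := hP h1
      rw [hodd b] at hP'
      nlinarith [hT', hP']
  intro x₁ x₂
  exact ⟨fun h => key x₁ x₂ h, fun h => key x₂ x₁ h⟩
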